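/- Let R1, R2, R3, R4 be four distinct simple graphs on the same finite vertex set, pairwise related by a single 2-switch. Then there do not exist two edges e and f such that both e and f belong to R1 and to R2 but belong to neither R3 nor R4. -/

import Mathlib

/-- Two unordered vertex pairs {a,b} and {c,d} are equal. -/
def pairEq {V : Type*} (a b c d : V) : Prop := (a = c ∧ b = d) ∨ (a = d ∧ b = c)

/-- `G'` is obtained from `G` by the 2-switch on the alternating 4-cycle `[u,v : w,x]`:
`uv, wx` are edges of `G`, `ux, vw` are non-edges, the four vertices are distinct, and the
adjacency of exactly these four pairs is toggled. -/
def IsTwoSwitchAt {V : Type*} (G G' : SimpleGraph V) (u v w x : V) : Prop :=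
  u ≠ v ∧ u ≠ w ∧ u ≠ x ∧ v ≠ w ∧ v ≠ x ∧ w ≠ x ∧
  G.Adj u v ∧ G.Adj w x ∧ ¬ G.Adj u x ∧ ¬ G.Adj v w ∧
  ∀ a b, G'.Adj a b ↔
    Xor' (G.Adj a b) (pairEq a b u v ∨ pairEq a b w x ∨ pairEq a b u x ∨ pairEq a b v w)

/-- `G'` is obtained from `G` by a single 2-switch. -/
def IsTwoSwitch {V : Type*} (G G' : SimpleGraph V) : Prop :=
  ∃ u v w x, IsTwoSwitchAt G G' u v w x

/-- The degree of `y` in `G`, as the number of neighbors. -/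
noncomputable def ndeg {V : Type*} (G : SimpleGraph V) (y : V) : ℕ := (G.neighborSet y).ncard

section helpers
variable {V : Type*}

lemma pairEq_adj {G : SimpleGraph V} {a b u x : V} (h : pairEq a b u x) (hab : G.Adj a b) :
    G.Adj u x := by
  rcases h with ⟨rfl, rfl⟩ | ⟨rfl, rfl⟩
  · exact hab
  · exact hab.symm

lemma pairEq_trans' {a b c d u v : V} (h1 : pairEq a b u v) (h2 : pairEq c d u v) :
    pairEq a b c d := by
  rcases h1 with ⟨rfl, rfl⟩ | ⟨rfl, rfl⟩ <;> rcases h2 with ⟨rfl, rfl⟩ | ⟨rfl, rfl⟩ <;>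
    simp [pairEq]

lemma xor_congr_right {A B C : Prop} (h : B ↔ C) : Xor' A B ↔ Xor' A C := by
  unfold Xor'; unfold Xor; tauto

set_option linter.unreachableTactic false in
set_option linter.unusedTactic false in
lemma switch_normalize {G G' : SimpleGraph V} {a b c d : V}
    (hab : G.Adj a b) (hcd : G.Adj c d) (hab' : ¬ G'.Adj a b) (hcd' : ¬ G'.Adj c d)
    (hef : ¬ pairEq a b c d) (hs : IsTwoSwitch G G') :
    (a ≠ b ∧ c ≠ d ∧ a ≠ c ∧ a ≠ d ∧ b ≠ c ∧ b ≠ d) ∧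
    ((¬ G.Adj a d ∧ ¬ G.Adj b c ∧ ∀ p q, G'.Adj p q ↔ Xor' (G.Adj p q)
        (pairEq p q a b ∨ pairEq p q c d ∨ pairEq p q a d ∨ pairEq p q b c)) ∨
     (¬ G.Adj a c ∧ ¬ G.Adj b d ∧ ∀ p q, G'.Adj p q ↔ Xor' (G.Adj p q)
        (pairEq p q a b ∨ pairEq p q c d ∨ pairEq p q a c ∨ pairEq p q b d))) := by
  obtain ⟨u, v, w, x, huv, huw, hux, hvw, hvx, hwx, hGuv, hGwx, hGux, hGvw, hiff⟩ := hs
  have hPab : pairEq a b u v ∨ pairEq a b w x ∨ pairEq a b u x ∨ pairEq a b v w := by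
    by_contra hP
    exact hab' ((hiff a b).mpr (Or.inl ⟨hab, hP⟩))
  have hPcd : pairEq c d u v ∨ pairEq c d w x ∨ pairEq c d u x ∨ pairEq c d v w := by
    by_contra hP
    exact hcd' ((hiff c d).mpr (Or.inl ⟨hcd, hP⟩))
  have hab2 : pairEq a b u v ∨ pairEq a b w x := by
    rcases hPab with h | h | h | h
    · exact Or.inl h
    · exact Or.inr h
    · exact absurd (pairEq_adj h hab) hGux
    · exact absurd (pairEq_adj h hab) hGvw
  have hcd2 : pairEq c d u v ∨ pairEq c d w x := by
    rcases hPcd with h | h | h | h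
    · exact Or.inl h
    · exact Or.inr h
    · exact absurd (pairEq_adj h hcd) hGux
    · exact absurd (pairEq_adj h hcd) hGvw
  rcases hab2 with h1 | h1 <;> rcases hcd2 with h2 | h2
  · exact absurd (pairEq_trans' h1 h2) hef
  · rcases h1 with ⟨rfl, rfl⟩ | ⟨rfl, rfl⟩ <;> rcases h2 with ⟨rfl, rfl⟩ | ⟨rfl, rfl⟩ <;>
    · constructor
      · refine ⟨?_, ?_, ?_, ?_, ?_, ?_⟩ <;> first | assumption | (apply Ne.symm; assumption)
      · first
        | exact Or.inl
            ⟨(by intro hh; first | exact hGux hh | exact hGux hh.symm | exact hGvw hh | exact hGvw hh.symm),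
             (by intro hh; first | exact hGux hh | exact hGux hh.symm | exact hGvw hh | exact hGvw hh.symm),
             fun p q => (hiff p q).trans (xor_congr_right (by
               constructor <;> rintro (h | h | h | h) <;>
                 first
                   | exact Or.inl h | exact Or.inl (Or.symm h)
                   | exact Or.inr (Or.inl h) | exact Or.inr (Or.inl (Or.symm h))
                   | exact Or.inr (Or.inr (Or.inl h)) | exact Or.inr (Or.inr (Or.inl (Or.symm h)))
                   | exact Or.inr (Or.inr (Or.inr h)) | exact Or.inr (Or.inr (Or.inr (Or.symm h)))))⟩
        | exact Or.inr
            ⟨(by intro hh; first | exact hGux hh | exact hGux hh.symm | exact hGvw hh | exact hGvw hh.symm),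
             (by intro hh; first | exact hGux hh | exact hGux hh.symm | exact hGvw hh | exact hGvw hh.symm),
             fun p q => (hiff p q).trans (xor_congr_right (by
               constructor <;> rintro (h | h | h | h) <;>
                 first
                   | exact Or.inl h | exact Or.inl (Or.symm h)
                   | exact Or.inr (Or.inl h) | exact Or.inr (Or.inl (Or.symm h))
                   | exact Or.inr (Or.inr (Or.inl h)) | exact Or.inr (Or.inr (Or.inl (Or.symm h)))
                   | exact Or.inr (Or.inr (Or.inr h)) | exact Or.inr (Or.inr (Or.inr (Or.symm h)))))⟩
  · rcases h1 with ⟨rfl, rfl⟩ | ⟨rfl, rfl⟩ <;> rcases h2 with ⟨rfl, rfl⟩ | ⟨rfl, rfl⟩ <;>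
    · constructor
      · refine ⟨?_, ?_, ?_, ?_, ?_, ?_⟩ <;> first | assumption | (apply Ne.symm; assumption)
      · first
        | exact Or.inl
            ⟨(by intro hh; first | exact hGux hh | exact hGux hh.symm | exact hGvw hh | exact hGvw hh.symm),
             (by intro hh; first | exact hGux hh | exact hGux hh.symm | exact hGvw hh | exact hGvw hh.symm),
             fun p q => (hiff p q).trans (xor_congr_right (by
               constructor <;> rintro (h | h | h | h) <;>
                 first
                   | exact Or.inl h | exact Or.inl (Or.symm h)
                   | exact Or.inr (Or.inl h) | exact Or.inr (Or.inl (Or.symm h))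
                   | exact Or.inr (Or.inr (Or.inl h)) | exact Or.inr (Or.inr (Or.inl (Or.symm h)))
                   | exact Or.inr (Or.inr (Or.inr h)) | exact Or.inr (Or.inr (Or.inr (Or.symm h)))))⟩
        | exact Or.inr
            ⟨(by intro hh; first | exact hGux hh | exact hGux hh.symm | exact hGvw hh | exact hGvw hh.symm),
             (by intro hh; first | exact hGux hh | exact hGux hh.symm | exact hGvw hh | exact hGvw hh.symm),
             fun p q => (hiff p q).trans (xor_congr_right (by
               constructor <;> rintro (h | h | h | h) <;>
                 first
                   | exact Or.inl h | exact Or.inl (Or.symm h)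
                   | exact Or.inr (Or.inl h) | exact Or.inr (Or.inl (Or.symm h))
                   | exact Or.inr (Or.inr (Or.inl h)) | exact Or.inr (Or.inr (Or.inl (Or.symm h)))
                   | exact Or.inr (Or.inr (Or.inr h)) | exact Or.inr (Or.inr (Or.inr (Or.symm h)))))⟩
  · exact absurd (pairEq_trans' h1 h2) hef

lemma eq_of_toggle {G0 G1 G2 : SimpleGraph V} {P : V → V → Prop}
    (h0 : ∀ p q, G2.Adj p q ↔ Xor' (G0.Adj p q) (P p q))
    (h1 : ∀ p q, G2.Adj p q ↔ Xor' (G1.Adj p q) (P p q)) : G0 = G1 := by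
  ext p q
  have ha := (h0 p q).symm.trans (h1 p q)
  unfold Xor' at ha
  unfold Xor at ha
  tauto

lemma eq_of_toggle' {G0 G2 G3 : SimpleGraph V} {P : V → V → Prop}
    (h0 : ∀ p q, G2.Adj p q ↔ Xor' (G0.Adj p q) (P p q))
    (h1 : ∀ p q, G3.Adj p q ↔ Xor' (G0.Adj p q) (P p q)) : G2 = G3 := by
  ext p q
  rw [h0 p q, h1 p q]

lemma final {R0 R1 R2 : SimpleGraph V} {a b c d : V}
    (hab : a ≠ b) (hcd : c ≠ d) (hac : a ≠ c) (had : a ≠ d) (hbd : b ≠ d)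
    (h0ad : ¬ R0.Adj a d) (h1ad : ¬ R1.Adj a d)
    (hF0 : ∀ p q, R2.Adj p q ↔ Xor' (R0.Adj p q)
      (pairEq p q a b ∨ pairEq p q c d ∨ pairEq p q a d ∨ pairEq p q b c))
    (hF1 : ∀ p q, R2.Adj p q ↔ Xor' (R1.Adj p q)
      (pairEq p q a b ∨ pairEq p q c d ∨ pairEq p q a c ∨ pairEq p q b d)) :
    False := by
  have h0 := hF0 a d
  have h1 := hF1 a d
  simp only [Xor', pairEq, h0ad, h1ad, hab, hcd, hac, had, hbd, hab.symm, hcd.symm, hac.symm,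
    had.symm, hbd.symm, eq_self_iff_true, true_and, and_true, false_and, and_false, false_or,
    or_false, not_false_iff, true_iff, iff_true, not_true, iff_false, false_iff] at h0 h1
  tauto

end helpers

/-- four distinct graphs pairwise related by a single 2-switch cannot have two
edges `e ≠ f` that both lie in `R 0` and `R 1` but in neither `R 2` nor `R 3`. -/
theorem no_two_shared_private_edges {V : Type*} [Fintype V] (R : Fin 4 → SimpleGraph V)
    (hdist : ∀ i j, i ≠ j → R i ≠ R j)
    (hsw : ∀ i j, i ≠ j → IsTwoSwitch (R i) (R j)) :
    ¬ ∃ e f : Sym2 V, e ≠ f ∧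
      e ∈ (R 0).edgeSet ∧ e ∈ (R 1).edgeSet ∧ e ∉ (R 2).edgeSet ∧ e ∉ (R 3).edgeSet ∧
      f ∈ (R 0).edgeSet ∧ f ∈ (R 1).edgeSet ∧ f ∉ (R 2).edgeSet ∧ f ∉ (R 3).edgeSet := by
  rintro ⟨e, f, hef, he0, he1, he2, he3, hf0, hf1, hf2, hf3⟩
  obtain ⟨a, b, rfl⟩ : ∃ a b, e = s(a, b) := ⟨e.out.1, e.out.2, by rw [Sym2.mk, e.out_eq]⟩
  obtain ⟨c, d, rfl⟩ : ∃ c d, f = s(c, d) := ⟨f.out.1, f.out.2, by rw [Sym2.mk, f.out_eq]⟩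
  rw [SimpleGraph.mem_edgeSet] at he0 he1 he2 he3 hf0 hf1 hf2 hf3
  have hne : ¬ pairEq a b c d := by
    intro h
    rcases h with ⟨rfl, rfl⟩ | ⟨rfl, rfl⟩
    · exact hef rfl
    · exact hef Sym2.eq_swap
  obtain ⟨⟨hab, hcd, hac, had, hbc, hbd⟩, H02⟩ :=
    switch_normalize he0 hf0 he2 hf2 hne (hsw 0 2 (by decide))
  obtain ⟨-, H03⟩ := switch_normalize he0 hf0 he3 hf3 hne (hsw 0 3 (by decide))
  obtain ⟨-, H12⟩ := switch_normalize he1 hf1 he2 hf2 hne (hsw 1 2 (by decide))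
  obtain ⟨-, H13⟩ := switch_normalize he1 hf1 he3 hf3 hne (hsw 1 3 (by decide))
  rcases H02 with ⟨n1, n2, F02⟩ | ⟨n1, n2, F02⟩ <;>
  rcases H03 with ⟨m1, m2, F03⟩ | ⟨m1, m2, F03⟩ <;>
  rcases H12 with ⟨k1, k2, F12⟩ | ⟨k1, k2, F12⟩ <;>
  rcases H13 with ⟨l1, l2, F13⟩ | ⟨l1, l2, F13⟩ <;>
  first
    | exact hdist 0 1 (by decide) (eq_of_toggle F02 F12)
    | exact hdist 2 3 (by decide) (eq_of_toggle' F02 F03)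
    | exact hdist 2 3 (by decide) (eq_of_toggle' F12 F13)
    | exact final hab hcd hac had hbd n1 l1 F02 F12
    | exact final hab hcd hac had hbd k1 m1 F12 F02
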